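/- There exists an absolute constant C such that the following holds. Let κ ≥ 1, let F be the norm F(x,y) := √(κ⁻¹x² + κy²), and for θ ∈ ℝ let F^θ(u) := F(R_θᵀ u), where R_θ is the rotation of ℝ² by angle θ. Fix u ∈ ℤ² ∖ {0}, and for each v ∈ ℤ² with ‖u‖ ≤ ‖v‖, ⟨u,v⟩ ≥ 0 and |det(u,v)| = 1, let I_{u,v} := {θ ∈ [0, 2π] : u and v do not form an F^θ-acute angle}. Then the sum over all such v of the Lebesgue measure of I_{u,v} is at most C(1 + ln κ)/‖u‖²; moreover this sum equals 0 if ‖u‖ ≥ √κ. -/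

import Mathlib

open scoped RealInnerProductSpace
open MeasureTheory Real

noncomputable section

abbrev E2 : Type := EuclideanSpace ℝ (Fin 2)

def mk2 (a b : ℝ) : E2 := WithLp.toLp 2 ![a, b]

def IsAsymNorm (F : E2 → ℝ) : Prop :=
  ConvexOn ℝ Set.univ F ∧
  (∀ (c : ℝ), 0 ≤ c → ∀ u : E2, F (c • u) = c * F u) ∧
  (∀ u : E2, 0 ≤ F u) ∧
  (∀ u : E2, u ≠ 0 → 0 < F u)

def IsAcute (F : E2 → ℝ) (u v : E2) : Prop :=
  ∀ δ : ℝ, 0 ≤ δ → F u ≤ F (u + δ • v) ∧ F v ≤ F (v + δ • u)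

noncomputable def kappa (F : E2 → ℝ) : ℝ :=
  sSup {r : ℝ | ∃ u v : E2, ‖u‖ = 1 ∧ ‖v‖ = 1 ∧ r = F u / F v}

def det2 (u v : E2) : ℝ := u 0 * v 1 - u 1 * v 0

def IsIntVec (u : E2) : Prop := (∃ n : ℤ, u 0 = (n : ℝ)) ∧ (∃ n : ℤ, u 1 = (n : ℝ))

def eTheta (θ : ℝ) : E2 := mk2 (Real.cos θ) (Real.sin θ)

noncomputable def phiF (F : E2 → ℝ) (θ : ℝ) : ℝ :=
  Real.arctan (det2 (eTheta θ) (gradient F (eTheta θ)) / F (eTheta θ))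

def rot2 (θ : ℝ) (w : E2) : E2 :=
  mk2 (Real.cos θ * w 0 - Real.sin θ * w 1) (Real.sin θ * w 0 + Real.cos θ * w 1)

def perp (z : E2) : E2 := mk2 (-(z 1)) (z 0)

/-- The set of grid orientations `θ ∈ [0, 2π]` for which `u, v` do not form an
`F^θ`-acute angle, where `F^θ(w) := F(R_θᵀ w)`. -/
def badAngles (F : E2 → ℝ) (u v : E2) : Set ℝ :=
  {θ : ℝ | θ ∈ Set.Icc 0 (2 * Real.pi) ∧ ¬ IsAcute (fun w => F (rot2 (-θ) w)) u v}

/-- The sum, over all `v ∈ ℤ²` with `‖u‖ ≤ ‖v‖`, `⟨u,v⟩ ≥ 0` and `|det(u,v)| = 1`,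
of the Lebesgue measures of the sets `badAngles F u v`. -/
noncomputable def totalBad (F : E2 → ℝ) (u : E2) : ENNReal :=
  ∑' v : {v : E2 // IsIntVec v ∧ ‖u‖ ≤ ‖v‖ ∧ 0 ≤ ⟪u, v⟫ ∧ |det2 u v| = 1},
    MeasureTheory.volume (badAngles F u v.1)

lemma mk2_0 (a b : ℝ) : mk2 a b 0 = a := rfl
lemma mk2_1 (a b : ℝ) : mk2 a b 1 = b := rfl
lemma add_apply' (u v : E2) (i : Fin 2) : (u + v) i = u i + v i := rfl
lemma smul_apply' (c : ℝ) (u : E2) (i : Fin 2) : (c • u) i = c * u i := rfl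
lemma inner2 (u v : E2) : ⟪u, v⟫ = u 0 * v 0 + u 1 * v 1 := by
  simp [PiLp.inner_apply, Fin.sum_univ_two, mul_comm]
lemma normsq2 (u : E2) : ‖u‖ ^ 2 = u 0 ^ 2 + u 1 ^ 2 := by
  rw [← real_inner_self_eq_norm_sq, inner2]; ring
lemma e2_eq_zero {w : E2} (h0 : w 0 = 0) (h1 : w 1 = 0) : w = 0 := by
  ext i; fin_cases i <;> simp [h0, h1]

lemma inner_formula {κ : ℝ} (hκ : 0 < κ) (θ : ℝ) (u v : E2) :
    κ⁻¹ * (rot2 (-θ) u 0 * rot2 (-θ) v 0) + κ * (rot2 (-θ) u 1 * rot2 (-θ) v 1)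
    = (κ + κ⁻¹)/2 * (u 0 * v 0 + u 1 * v 1)
      - (κ - κ⁻¹)/2 * ((u 0 * v 0 - u 1 * v 1) * Real.cos (2*θ)
          + (u 0 * v 1 + u 1 * v 0) * Real.sin (2*θ)) := by
  have hcs : Real.sin θ ^ 2 + Real.cos θ ^ 2 = 1 := Real.sin_sq_add_cos_sq θ
  have hκ0 : κ ≠ 0 := ne_of_gt hκ
  simp only [rot2, mk2_0, mk2_1, Real.cos_neg, Real.sin_neg, Real.cos_two_mul,
    Real.sin_two_mul]
  linear_combination (κ⁻¹ * u 1 * v 1 + κ * u 0 * v 0) * hcs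

lemma rot2_add (θ : ℝ) (u v : E2) (δ : ℝ) (i : Fin 2) :
    rot2 θ (u + δ • v) i = rot2 θ u i + δ * rot2 θ v i := by
  match i with
  | 0 => simp only [rot2, mk2_0, mk2_1, add_apply', smul_apply']; ring
  | 1 => simp only [rot2, mk2_0, mk2_1, add_apply', smul_apply']; ring

lemma acute_of_inner {κ : ℝ} (hκ : 0 < κ) {F : E2 → ℝ}
    (hF : ∀ w : E2, F w = Real.sqrt (κ⁻¹ * (w 0) ^ 2 + κ * (w 1) ^ 2))
    (θ : ℝ) (u v : E2)
    (h : 0 ≤ κ⁻¹ * (rot2 (-θ) u 0 * rot2 (-θ) v 0) + κ * (rot2 (-θ) u 1 * rot2 (-θ) v 1)) :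
    IsAcute (fun w => F (rot2 (-θ) w)) u v := by
  have hκ' : (0:ℝ) < κ⁻¹ := inv_pos.2 hκ
  intro δ hδ
  constructor
  · simp only [hF]
    apply Real.sqrt_le_sqrt
    rw [rot2_add, rot2_add]
    nlinarith [mul_nonneg hδ h, mul_nonneg (mul_nonneg hδ hδ)
      (add_nonneg (mul_nonneg hκ'.le (sq_nonneg (rot2 (-θ) v 0)))
        (mul_nonneg hκ.le (sq_nonneg (rot2 (-θ) v 1))))]
  · simp only [hF]
    apply Real.sqrt_le_sqrt
    rw [rot2_add, rot2_add]
    nlinarith [mul_nonneg hδ h, mul_nonneg (mul_nonneg hδ hδ)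
      (add_nonneg (mul_nonneg hκ'.le (sq_nonneg (rot2 (-θ) u 0)))
        (mul_nonneg hκ.le (sq_nonneg (rot2 (-θ) u 1))))]

lemma cos_two_mul_sin (y : ℝ) : Real.cos (2 * y) = 1 - 2 * Real.sin y ^ 2 := by
  rw [Real.cos_two_mul]
  nlinarith [Real.sin_sq_add_cos_sq y]

set_option maxHeartbeats 2000000 in
lemma cover_measure (A B c : ℝ) (hc : 0 ≤ c) (hN : 0 < A ^ 2 + B ^ 2) :
    volume {θ : ℝ | θ ∈ Set.Icc 0 (2 * Real.pi) ∧ c < A * Real.cos (2 * θ) + B * Real.sin (2 * θ)}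
      ≤ ENNReal.ofReal (20 * (Real.sqrt (A ^ 2 + B ^ 2 - c ^ 2) / Real.sqrt (A ^ 2 + B ^ 2))) := by
  set N : ℝ := Real.sqrt (A ^ 2 + B ^ 2) with hNdef
  have hN0 : 0 < N := Real.sqrt_pos.2 hN
  have hNsq : N ^ 2 = A ^ 2 + B ^ 2 := Real.sq_sqrt hN.le
  clear_value N
  by_cases hcN : N ≤ c
  · convert_to volume (∅ : Set ℝ) ≤ _
    · congr 1
      rw [Set.eq_empty_iff_forall_notMem]
      rintro θ ⟨-, hlt⟩
      have hCS : (A * Real.cos (2 * θ) + B * Real.sin (2 * θ)) ^ 2 ≤ N ^ 2 := by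
        rw [hNsq]
        nlinarith only [sq_nonneg (A * Real.sin (2 * θ) - B * Real.cos (2 * θ)),
          Real.sin_sq_add_cos_sq (2 * θ)]
      have hXN : N < A * Real.cos (2 * θ) + B * Real.sin (2 * θ) := lt_of_le_of_lt hcN hlt
      nlinarith only [hCS, mul_pos (sub_pos.2 hXN)
        (by linarith only [hXN, hN0] : (0:ℝ) < A * Real.cos (2 * θ) + B * Real.sin (2 * θ) + N)]
    · simp
  push_neg at hcN
  have hc2 : c ^ 2 < N ^ 2 := by nlinarith only [hcN, hc]
  set σ : ℝ := Real.sqrt (A ^ 2 + B ^ 2 - c ^ 2) / N with hσdef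
  have hσ0 : 0 ≤ σ := div_nonneg (Real.sqrt_nonneg _) hN0.le
  have hσsq : σ ^ 2 = 1 - (c / N) ^ 2 := by
    rw [hσdef, div_pow, Real.sq_sqrt (by linarith only [hc2, hNsq] : (0:ℝ) ≤ A ^ 2 + B ^ 2 - c ^ 2),
      ← hNsq]
    field_simp
  clear_value σ
  have hπ : (0:ℝ) < π := Real.pi_pos
  set z : ℂ := ⟨A, B⟩ with hz
  have hzabs : ‖z‖ = N := by
    rw [Complex.norm_def, Complex.normSq_apply]
    simp only [hz]
    rw [hNdef]; ring_nf
  have hz0 : z ≠ 0 := by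
    intro h; rw [h] at hzabs; simp at hzabs; exact hN0.ne' hzabs.symm
  set φ : ℝ := Complex.arg z with hφdef
  have hφcos : Real.cos φ = A / N := by rw [hφdef, Complex.cos_arg hz0, hzabs]
  have hφsin : Real.sin φ = B / N := by rw [hφdef, Complex.sin_arg, hzabs]
  have hφle : |φ| ≤ π := Complex.abs_arg_le_pi z
  clear_value φ
  clear_value z
  have hsub : {θ : ℝ | θ ∈ Set.Icc 0 (2 * Real.pi) ∧ c < A * Real.cos (2 * θ) + B * Real.sin (2 * θ)}
      ⊆ ⋃ k ∈ Finset.Icc (-1 : ℤ) 3, Metric.closedBall (φ / 2 + k * π) (2 * σ) := by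
    rintro θ ⟨⟨h0, h2π⟩, hlt⟩
    have hcosψ : Real.cos (2 * θ - φ) = (A * Real.cos (2 * θ) + B * Real.sin (2 * θ)) / N := by
      rw [Real.cos_sub, hφcos, hφsin]; field_simp
    set k : ℤ := round ((2 * θ - φ) / (2 * π)) with hk
    have hx : |2 * θ - φ - k * (2 * π)| ≤ π := by
      have h1 : |(2 * θ - φ) / (2 * π) - k| ≤ 1 / 2 := abs_sub_round _
      have h2 : (0:ℝ) < 2 * π := by linarith only [hπ]
      have he : 2 * θ - φ - k * (2 * π) = ((2 * θ - φ) / (2 * π) - k) * (2 * π) := by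
        field_simp
      rw [he, abs_mul, abs_of_pos h2]
      calc |(2 * θ - φ) / (2 * π) - (k:ℝ)| * (2 * π) ≤ 1 / 2 * (2 * π) := by gcongr
        _ = π := by ring
    set x : ℝ := 2 * θ - φ - k * (2 * π) with hxdef
    have hcosx : Real.cos x = Real.cos (2 * θ - φ) := Real.cos_sub_int_mul_two_pi _ _
    clear_value x k
    have hcx : c / N < Real.cos x := by
      rw [hcosx, hcosψ]
      gcongr
    have hcx0 : 0 < Real.cos x := lt_of_le_of_lt (by positivity) hcx
    have hxhalf : |x| < π / 2 := by
      by_contra hcon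
      push_neg at hcon
      have : Real.cos |x| ≤ 0 :=
        Real.cos_nonpos_of_pi_div_two_le_of_le hcon (by linarith only [hx, hπ, abs_le.1 hx])
      rw [Real.cos_abs] at this; linarith only [this, hcx0]
    have hsinb : |x| / π ≤ Real.sin (|x| / 2) := by
      have h := Real.mul_le_sin (x := |x| / 2) (by positivity)
        (by linarith only [hx] : |x| / 2 ≤ π / 2)
      calc |x| / π = 2 / π * (|x| / 2) := by field_simp
        _ ≤ Real.sin (|x| / 2) := h
    have hcos_eq : Real.cos x = 1 - 2 * Real.sin (|x| / 2) ^ 2 := by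
      have e1 : Real.cos (2 * (x / 2)) = 1 - 2 * Real.sin (x / 2) ^ 2 := cos_two_mul_sin (x / 2)
      have e2 : Real.sin (|x| / 2) ^ 2 = Real.sin (x / 2) ^ 2 := by
        rcases abs_cases x with ⟨h, -⟩ | ⟨h, -⟩ <;> rw [h]
        rw [neg_div, Real.sin_neg]; ring
      rw [e2, ← e1]; congr 1; ring
    have htle : c / N ≤ 1 := by rw [div_le_one hN0]; exact hcN.le
    have ht0 : 0 ≤ c / N := div_nonneg hc hN0.le
    have h9 : (|x| / π) ^ 2 ≤ Real.sin (|x| / 2) ^ 2 :=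
      pow_le_pow_left₀ (div_nonneg (abs_nonneg x) hπ.le) hsinb 2
    have h1 : 2 * (|x| / π) ^ 2 ≤ 1 - c / N := by
      linarith only [hcx, hcos_eq, h9]
    have hts : (c / N) ^ 2 ≤ c / N := by
      nlinarith only [mul_nonneg ht0 (sub_nonneg.2 htle)]
    have h5 : 1 - c / N ≤ σ ^ 2 := by linarith only [hσsq, hts]
    have h7 : |x| ^ 2 = (|x| / π) ^ 2 * π ^ 2 := by field_simp
    have hπ4 : π ≤ 4 := by linarith only [Real.pi_le_four]
    have hxsq : |x| ^ 2 ≤ 16 * σ ^ 2 := by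
      have hq : (|x| / π) ^ 2 ≤ σ ^ 2 / 2 := by linarith only [h1, h5]
      have hq2 : π ^ 2 ≤ 16 := by nlinarith only [hπ, hπ4]
      have h8 : (|x| / π) ^ 2 * π ^ 2 ≤ (σ ^ 2 / 2) * 16 :=
        mul_le_mul hq hq2 (by positivity) (by positivity)
      rw [h7]; linarith only [h8, sq_nonneg σ]
    have hxle : |x| ≤ 4 * σ := by
      have h := Real.sqrt_le_sqrt hxsq
      rwa [Real.sqrt_sq_eq_abs, abs_abs,
        show (16:ℝ) * σ ^ 2 = (4 * σ) ^ 2 by ring, Real.sqrt_sq (by positivity)] at h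
    have hmem : θ ∈ Metric.closedBall (φ / 2 + k * π) (2 * σ) := by
      rw [Metric.mem_closedBall, Real.dist_eq]
      have he2 : θ - (φ / 2 + k * π) = x / 2 := by rw [hxdef]; ring
      rw [he2, abs_div]
      simp only [abs_two]
      linarith only [hxle]
    have hkrange : k ∈ Finset.Icc (-1 : ℤ) 3 := by
      have he3 : (k : ℝ) * π = θ - φ / 2 - x / 2 := by rw [hxdef]; ring
      have hφ1 := abs_le.1 hφle
      have hx1 := abs_le.1 hx
      have hlo : (-1 : ℝ) * π ≤ (k : ℝ) * π := by
        rw [he3]; linarith only [hφ1.1, hφ1.2, hx1.1, hx1.2, h0, h2π, hπ]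
      have hhi : (k : ℝ) * π ≤ 3 * π := by
        rw [he3]; linarith only [hφ1.1, hφ1.2, hx1.1, hx1.2, h0, h2π, hπ]
      have hlo' : (-1 : ℝ) ≤ (k : ℝ) := le_of_mul_le_mul_right (by linarith only [hlo]) hπ
      have hhi' : (k : ℝ) ≤ 3 := le_of_mul_le_mul_right (by linarith only [hhi]) hπ
      rw [Finset.mem_Icc]
      constructor <;> [exact_mod_cast hlo'; exact_mod_cast hhi']
    exact Set.mem_biUnion hkrange hmem
  calc volume _ ≤ volume (⋃ k ∈ Finset.Icc (-1 : ℤ) 3, Metric.closedBall (φ / 2 + k * π) (2 * σ)) :=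
        measure_mono hsub
    _ ≤ ∑ k ∈ Finset.Icc (-1 : ℤ) 3, volume (Metric.closedBall ((φ / 2 + k * π : ℝ)) (2 * σ)) :=
        measure_biUnion_finset_le _ _
    _ = ∑ k' ∈ Finset.Icc (-1 : ℤ) 3, ENNReal.ofReal (2 * (2 * σ)) := by
        simp [Real.volume_closedBall]
    _ ≤ ENNReal.ofReal (20 * σ) := by
        rw [Finset.sum_const]
        have hcard : (Finset.Icc (-1 : ℤ) 3).card = 5 := by decide
        rw [hcard, nsmul_eq_mul]
        calc (5 : ENNReal) * ENNReal.ofReal (2 * (2 * σ))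
            = ENNReal.ofReal 5 * ENNReal.ofReal (2 * (2 * σ)) := by norm_num
          _ = ENNReal.ofReal (5 * (2 * (2 * σ))) := (ENNReal.ofReal_mul (by norm_num)).symm
          _ ≤ ENNReal.ofReal (20 * σ) := by
              apply ENNReal.ofReal_le_ofReal; linarith only [hσ0]

set_option maxHeartbeats 1000000 in
lemma perv_main {κ : ℝ} (hκ1 : 1 ≤ κ) {F : E2 → ℝ}
    (hF : ∀ w : E2, F w = Real.sqrt (κ⁻¹ * (w 0) ^ 2 + κ * (w 1) ^ 2))
    (u v : E2) (hpv : 0 ≤ ⟪u, v⟫) (hdv : |det2 u v| = 1) :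
    ((κ - κ⁻¹) / 2 ≤ ⟪u, v⟫ → badAngles F u v = ∅) ∧
    (⟪u, v⟫ < (κ - κ⁻¹) / 2 →
      volume (badAngles F u v) ≤ ENNReal.ofReal (20 / Real.sqrt (⟪u, v⟫ ^ 2 + 1))) := by
  have hκ0 : (0:ℝ) < κ := lt_of_lt_of_le one_pos hκ1
  have hκi : (0:ℝ) < κ⁻¹ := inv_pos.2 hκ0
  have hκi1 : κ⁻¹ ≤ 1 := inv_le_one_of_one_le₀ hκ1
  set p : ℝ := ⟪u, v⟫ with hpdef
  set m : ℝ := (κ + κ⁻¹) / 2 with hmdef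
  set s : ℝ := (κ - κ⁻¹) / 2 with hsdef
  have hm0 : 0 < m := by rw [hmdef]; positivity
  have hms : s < m := by rw [hmdef, hsdef]; linarith only [hκi]
  have hm2 : m ^ 2 = s ^ 2 + 1 := by
    rw [hmdef, hsdef]
    field_simp
    ring
  set A : ℝ := u 0 * v 0 - u 1 * v 1 with hAdef
  set B : ℝ := u 0 * v 1 + u 1 * v 0 with hBdef
  have hd2 : det2 u v ^ 2 = 1 := by rw [← sq_abs, hdv]; norm_num
  have hAB : A ^ 2 + B ^ 2 = p ^ 2 + 1 := by
    rw [hAdef, hBdef, hpdef, inner2, ← hd2, det2]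
    ring
  have hp1 : p = u 0 * v 0 + u 1 * v 1 := by rw [hpdef, inner2]
  -- inclusion of the bad set
  have badsub : badAngles F u v ⊆
      {θ : ℝ | θ ∈ Set.Icc 0 (2 * Real.pi) ∧
        m * p - s * (A * Real.cos (2 * θ) + B * Real.sin (2 * θ)) < 0} := by
    rintro θ ⟨hIcc, hnac⟩
    refine ⟨hIcc, ?_⟩
    by_contra hge
    push_neg at hge
    apply hnac
    apply acute_of_inner hκ0 hF θ u v
    have := inner_formula hκ0 θ u v
    rw [mul_comm (rot2 (-θ) u 0), mul_comm (rot2 (-θ) u 1)] at this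
    rw [show κ⁻¹ * (rot2 (-θ) u 0 * rot2 (-θ) v 0) + κ * (rot2 (-θ) u 1 * rot2 (-θ) v 1)
        = κ⁻¹ * (rot2 (-θ) u 0 * rot2 (-θ) v 0) + κ * (rot2 (-θ) u 1 * rot2 (-θ) v 1) from rfl]
    rw [inner_formula hκ0 θ u v]
    rw [← hp1, ← hAdef, ← hBdef, ← hmdef, ← hsdef] at *
    linarith only [hge]
  have hCSX : ∀ θ : ℝ, (A * Real.cos (2 * θ) + B * Real.sin (2 * θ)) ^ 2 ≤ p ^ 2 + 1 := by
    intro θ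
    rw [← hAB]
    nlinarith only [sq_nonneg (A * Real.sin (2 * θ) - B * Real.cos (2 * θ)),
      Real.sin_sq_add_cos_sq (2 * θ)]
  constructor
  · -- empty when s ≤ p
    intro hsp
    rw [Set.eq_empty_iff_forall_notMem]
    intro θ hθ
    obtain ⟨-, hlt⟩ := badsub hθ
    -- show m * p ≥ s * X
    set X : ℝ := A * Real.cos (2 * θ) + B * Real.sin (2 * θ) with hXdef
    have hX2 : X ^ 2 ≤ p ^ 2 + 1 := hCSX θ
    have hs0 : 0 ≤ s := by rw [hsdef]; linarith only [hκ1, hκi1]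
    have h1 : (s * X) ^ 2 ≤ s ^ 2 * (p ^ 2 + 1) := by
      have := mul_le_mul_of_nonneg_left hX2 (sq_nonneg s)
      calc (s * X) ^ 2 = s ^ 2 * X ^ 2 := by ring
        _ ≤ s ^ 2 * (p ^ 2 + 1) := this
    have h2 : s ^ 2 * (p ^ 2 + 1) ≤ (m * p) ^ 2 := by
      have hsp2 : s ^ 2 ≤ p ^ 2 := pow_le_pow_left₀ hs0 hsp 2
      calc s ^ 2 * (p ^ 2 + 1) = s ^ 2 * p ^ 2 + s ^ 2 := by ring
        _ ≤ s ^ 2 * p ^ 2 + p ^ 2 := by linarith only [hsp2]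
        _ = (s ^ 2 + 1) * p ^ 2 := by ring
        _ = (m * p) ^ 2 := by rw [mul_pow, hm2]
    have h3 : s * X ≤ m * p := by
      have h4 := Real.sqrt_le_sqrt (le_trans h1 h2)
      rw [Real.sqrt_sq_eq_abs] at h4
      have h5 : Real.sqrt ((m * p) ^ 2) = m * p := by
        rw [Real.sqrt_sq_eq_abs, abs_of_nonneg (mul_nonneg hm0.le hpv)]
      rw [h5] at h4
      exact le_trans (le_abs_self _) h4
    linarith only [hlt, h3]
  · -- measure bound when p < s
    intro hps
    have hs0' : 0 < s := lt_of_le_of_lt hpv hps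
    have hc0 : 0 ≤ m * p / s := by positivity
    have sub2 : badAngles F u v ⊆
        {θ : ℝ | θ ∈ Set.Icc 0 (2 * Real.pi) ∧
          m * p / s < A * Real.cos (2 * θ) + B * Real.sin (2 * θ)} := by
      intro θ hθ
      obtain ⟨hIcc, hlt⟩ := badsub hθ
      exact ⟨hIcc, by rw [div_lt_iff₀ hs0']; linarith only [hlt]⟩
    have hABpos : (0:ℝ) < A ^ 2 + B ^ 2 := by rw [hAB]; positivity
    calc volume (badAngles F u v)
        ≤ volume {θ : ℝ | θ ∈ Set.Icc 0 (2 * Real.pi) ∧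
            m * p / s < A * Real.cos (2 * θ) + B * Real.sin (2 * θ)} := measure_mono sub2
      _ ≤ ENNReal.ofReal (20 * (Real.sqrt (A ^ 2 + B ^ 2 - (m * p / s) ^ 2)
            / Real.sqrt (A ^ 2 + B ^ 2))) := cover_measure A B (m * p / s) hc0 hABpos
      _ ≤ ENNReal.ofReal (20 / Real.sqrt (p ^ 2 + 1)) := by
          apply ENNReal.ofReal_le_ofReal
          rw [hAB]
          have hpc : p ≤ m * p / s := by
            rw [le_div_iff₀ hs0']
            nlinarith only [hpv, hms.le, hs0']
          have hS1 : Real.sqrt (p ^ 2 + 1 - (m * p / s) ^ 2) ≤ 1 := by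
            have harg : p ^ 2 + 1 - (m * p / s) ^ 2 ≤ 1 := by
              have := pow_le_pow_left₀ hpv hpc 2
              linarith only [this]
            calc Real.sqrt (p ^ 2 + 1 - (m * p / s) ^ 2) ≤ Real.sqrt 1 :=
                  Real.sqrt_le_sqrt harg
              _ = 1 := Real.sqrt_one
          have hS2 : (0:ℝ) < Real.sqrt (p ^ 2 + 1) := Real.sqrt_pos.2 (by positivity)
          rw [div_eq_mul_one_div 20 (Real.sqrt (p ^ 2 + 1))]
          apply mul_le_mul_of_nonneg_left _ (by norm_num : (0:ℝ) ≤ 20)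
          rw [div_le_div_iff₀ hS2 hS2]
          nlinarith only [hS1, hS2]

lemma harmonic_bound (K : ℕ) (Q : ℝ) (hQ : 1 ≤ Q) :
    ∑ n ∈ Finset.range (K + 1), 40 / (max (n : ℝ) 1 * Q) ≤ 40 * (2 + Real.log K) / Q := by
  have hQ0 : (0:ℝ) < Q := lt_of_lt_of_le one_pos hQ
  rw [Finset.sum_range_succ']
  have h0 : (40:ℝ) / (max ((0:ℕ) : ℝ) 1 * Q) = 40 / Q := by norm_num
  rw [h0]
  have hterm : ∀ i : ℕ, (40:ℝ) / (max ((i + 1 : ℕ) : ℝ) 1 * Q) = (40 / Q) * (1 / (i + 1)) := by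
    intro i
    have : max ((i + 1 : ℕ) : ℝ) 1 = ((i + 1 : ℕ) : ℝ) := by
      apply max_eq_left
      exact_mod_cast Nat.one_le_iff_ne_zero.2 (Nat.succ_ne_zero i)
    rw [this]
    push_cast
    field_simp
  rw [Finset.sum_congr rfl (fun i _ => hterm i), ← Finset.mul_sum]
  have hharm : ∑ i ∈ Finset.range K, (1 : ℝ) / (i + 1) = ((harmonic K : ℚ) : ℝ) := by
    rw [harmonic]
    push_cast
    apply Finset.sum_congr rfl
    intro i _
    rw [one_div]
  rw [hharm]
  have hlog := harmonic_le_one_add_log K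
  have h40 : (0:ℝ) < 40 / Q := by positivity
  calc 40 / Q * ((harmonic K : ℚ) : ℝ) + 40 / Q
      ≤ 40 / Q * (1 + Real.log K) + 40 / Q := by
        apply add_le_add_left
        exact mul_le_mul_of_nonneg_left hlog h40.le
    _ = 40 * (2 + Real.log K) / Q := by field_simp; ring

set_option maxHeartbeats 2000000 in
/-- for the norm `F(x,y) = √(κ⁻¹x² + κy²)` and `u ∈ ℤ² ∖ {0}`, the sum
over `v` of the measures of the bad-orientation sets `I_{u,v}` is at most
`C(1 + ln κ)/‖u‖²`, and vanishes when `‖u‖ ≥ √κ`. -/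
theorem stmt10 : ∃ C : ℝ, 0 < C ∧ ∀ κ : ℝ, 1 ≤ κ →
    ∀ F : E2 → ℝ, (∀ w : E2, F w = Real.sqrt (κ⁻¹ * (w 0) ^ 2 + κ * (w 1) ^ 2)) →
    ∀ u : E2, IsIntVec u → u ≠ 0 →
      totalBad F u ≤ ENNReal.ofReal (C * (1 + Real.log κ) / ‖u‖ ^ 2) ∧
      (Real.sqrt κ ≤ ‖u‖ → totalBad F u = 0) := by
  refine ⟨120, by norm_num, ?_⟩
  intro κ hκ F hF u hu hu0
  have hκ0 : (0:ℝ) < κ := lt_of_lt_of_le one_pos hκ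
  have hκi : (0:ℝ) < κ⁻¹ := inv_pos.2 hκ0
  have hκi1 : κ⁻¹ ≤ 1 := inv_le_one_of_one_le₀ hκ
  obtain ⟨⟨a, ha⟩, ⟨b, hb⟩⟩ := id hu
  have hQr : ‖u‖ ^ 2 = u 0 ^ 2 + u 1 ^ 2 := normsq2 u
  have hQzeq : ‖u‖ ^ 2 = ((a ^ 2 + b ^ 2 : ℤ) : ℝ) := by
    rw [hQr, ha, hb]; push_cast; ring
  have hQz1 : 1 ≤ a ^ 2 + b ^ 2 := by
    rcases (show a ≠ 0 ∨ b ≠ 0 by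
      by_contra hcon
      push_neg at hcon
      exact hu0 (e2_eq_zero (by rw [ha, hcon.1]; norm_num) (by rw [hb, hcon.2]; norm_num)))
      with h | h
    · nlinarith only [sq_nonneg b, Int.one_le_abs h, sq_abs a]
    · nlinarith only [sq_nonneg a, Int.one_le_abs h, sq_abs b]
  have hQr1 : (1:ℝ) ≤ ‖u‖ ^ 2 := by rw [hQzeq]; exact_mod_cast hQz1
  have hQr0 : (0:ℝ) < ‖u‖ ^ 2 := lt_of_lt_of_le one_pos hQr1
  -- squared-norm inequality for admissible v
  have hp2 : ∀ v : E2, ‖u‖ ≤ ‖v‖ → |det2 u v| = 1 → (‖u‖ ^ 2) ^ 2 ≤ ⟪u, v⟫ ^ 2 + 1 := by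
    intro v hn hd
    have hd2 : det2 u v ^ 2 = 1 := by rw [← sq_abs, hd]; norm_num
    have hpd : ⟪u, v⟫ ^ 2 + det2 u v ^ 2 = ‖u‖ ^ 2 * ‖v‖ ^ 2 := by
      rw [inner2, det2, hQr, normsq2]; ring
    have hvn : ‖u‖ ^ 2 ≤ ‖v‖ ^ 2 := pow_le_pow_left₀ (norm_nonneg u) hn 2
    nlinarith only [hpd, hd2, hvn, hQr0]
  have empty_part : Real.sqrt κ ≤ ‖u‖ → totalBad F u = 0 := by
    intro hsq
    have hκQ : κ ≤ ‖u‖ ^ 2 := by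
      have := pow_le_pow_left₀ (Real.sqrt_nonneg κ) hsq 2
      rwa [Real.sq_sqrt hκ0.le] at this
    rw [totalBad, ENNReal.tsum_eq_zero]
    rintro ⟨v, hvi, hn, hp, hd⟩
    simp only
    have hemp := (perv_main hκ hF u v hp hd).1
    rw [hemp, measure_empty]
    have h1 := hp2 v hn hd
    have hs2 : ((κ - κ⁻¹) / 2) ^ 2 ≤ κ ^ 2 - 1 := by
      nlinarith only [hκ, hκi1, hκi, mul_inv_cancel₀ (ne_of_gt hκ0)]
    have h2 : κ ^ 2 - 1 ≤ ⟪u, v⟫ ^ 2 := by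
      nlinarith only [h1, hκQ, hκ0, hQr1]
    have hs0 : 0 ≤ (κ - κ⁻¹) / 2 := by linarith only [hκ, hκi1]
    nlinarith only [hs2, h2, hp, hs0]
  refine ⟨?_, empty_part⟩
  classical
  set K : ℕ := ⌈κ⌉₊ with hKdef
  set g : ℤ × ℤ → ENNReal := fun x =>
    if (x.2 = 1 ∨ x.2 = -1) ∧ ((x.1 = 0 ∧ ‖u‖ ^ 2 = 1) ∨ (1 ≤ x.1 ∧ x.1 ≤ (K : ℤ)))
    then ENNReal.ofReal (20 / (max (x.1 : ℝ) 1 * ‖u‖ ^ 2)) else 0 with hgdef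
  set Ψ : {v : E2 // IsIntVec v ∧ ‖u‖ ≤ ‖v‖ ∧ 0 ≤ ⟪u, v⟫ ∧ |det2 u v| = 1} → ℤ × ℤ :=
    fun v => (⌊⟪u, v.1⟫ / ‖u‖ ^ 2⌋, ⌊det2 u v.1⌋) with hΨdef
  have claim_bound : ∀ v, volume (badAngles F u v.1) ≤ g (Ψ v) := by
    rintro ⟨v, hvi, hn, hp, hd⟩
    obtain ⟨⟨c, hc⟩, ⟨d, hdcoord⟩⟩ := id hvi
    have hpz : ⟪u, v⟫ = ((a * c + b * d : ℤ) : ℝ) := by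
      rw [inner2, ha, hb, hc, hdcoord]; push_cast; ring
    by_cases hps : (κ - κ⁻¹) / 2 ≤ ⟪u, v⟫
    · rw [show (⟨v, hvi, hn, hp, hd⟩ : {v : E2 // IsIntVec v ∧ ‖u‖ ≤ ‖v‖ ∧ 0 ≤ ⟪u, v⟫ ∧
          |det2 u v| = 1}).1 = v from rfl,
        (perv_main hκ hF u v hp hd).1 hps, measure_empty]
      exact zero_le
    push_neg at hps
    have hvol := (perv_main hκ hF u v hp hd).2 hps
    have hk0 : 0 ≤ ⌊⟪u, v⟫ / ‖u‖ ^ 2⌋ := Int.floor_nonneg.2 (by positivity)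
    have hkQ : (⌊⟪u, v⟫ / ‖u‖ ^ 2⌋ : ℝ) * ‖u‖ ^ 2 ≤ ⟪u, v⟫ := by
      have h := Int.floor_le (⟪u, v⟫ / ‖u‖ ^ 2)
      calc (⌊⟪u, v⟫ / ‖u‖ ^ 2⌋ : ℝ) * ‖u‖ ^ 2 ≤ ⟪u, v⟫ / ‖u‖ ^ 2 * ‖u‖ ^ 2 :=
            mul_le_mul_of_nonneg_right h hQr0.le
        _ = ⟪u, v⟫ := by field_simp
    have hQ1 : ⌊⟪u, v⟫ / ‖u‖ ^ 2⌋ = 0 → ‖u‖ ^ 2 = 1 := by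
      intro hk
      have h1 := Int.floor_eq_zero_iff.1 hk
      have h2 : ⟪u, v⟫ / ‖u‖ ^ 2 < 1 := h1.2
      have hplt : ⟪u, v⟫ < ‖u‖ ^ 2 := by
        calc ⟪u, v⟫ = ⟪u, v⟫ / ‖u‖ ^ 2 * ‖u‖ ^ 2 := by field_simp
          _ < 1 * ‖u‖ ^ 2 := mul_lt_mul_of_pos_right h2 hQr0
          _ = ‖u‖ ^ 2 := one_mul _
      have h3 := hp2 v hn hd
      have hpzlt : a * c + b * d < a ^ 2 + b ^ 2 := by
        rw [hpz, hQzeq] at hplt; exact_mod_cast hplt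
      have hpz0 : (0:ℤ) ≤ a * c + b * d := by
        rw [hpz] at hp; exact_mod_cast hp
      have hQz2 : (a ^ 2 + b ^ 2) ^ 2 ≤ (a * c + b * d) ^ 2 + 1 := by
        rw [hpz, hQzeq] at h3; exact_mod_cast h3
      have hone : a ^ 2 + b ^ 2 = 1 := by nlinarith only [hpzlt, hpz0, hQz2, hQz1]
      rw [hQzeq, hone]; norm_num
    have hdet : det2 u v = 1 ∨ det2 u v = -1 := by
      rcases (abs_eq (by norm_num : (0:ℝ) ≤ 1)).1 hd with h | h
      exacts [Or.inl h, Or.inr h]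
    have hdetfloor : ⌊det2 u v⌋ = 1 ∨ ⌊det2 u v⌋ = -1 := by
      rcases hdet with h | h <;> rw [h] <;> norm_num
    have hcond : (⌊det2 u v⌋ = 1 ∨ ⌊det2 u v⌋ = -1) ∧
        ((⌊⟪u, v⟫ / ‖u‖ ^ 2⌋ = 0 ∧ ‖u‖ ^ 2 = 1) ∨
         (1 ≤ ⌊⟪u, v⟫ / ‖u‖ ^ 2⌋ ∧ ⌊⟪u, v⟫ / ‖u‖ ^ 2⌋ ≤ (K : ℤ))) := by
      refine ⟨hdetfloor, ?_⟩
      by_cases hk : ⌊⟪u, v⟫ / ‖u‖ ^ 2⌋ = 0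
      · exact Or.inl ⟨hk, hQ1 hk⟩
      · right
        have hk1 : 1 ≤ ⌊⟪u, v⟫ / ‖u‖ ^ 2⌋ := by omega
        refine ⟨hk1, ?_⟩
        have h5 : ((⌊⟪u, v⟫ / ‖u‖ ^ 2⌋ : ℤ) : ℝ) ≤ ⟪u, v⟫ := by
          calc ((⌊⟪u, v⟫ / ‖u‖ ^ 2⌋ : ℤ) : ℝ) = (⌊⟪u, v⟫ / ‖u‖ ^ 2⌋ : ℝ) * 1 := (mul_one _).symm
            _ ≤ (⌊⟪u, v⟫ / ‖u‖ ^ 2⌋ : ℝ) * ‖u‖ ^ 2 :=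
                mul_le_mul_of_nonneg_left hQr1 (by exact_mod_cast hk0)
            _ ≤ ⟪u, v⟫ := hkQ
        have h6 : ⟪u, v⟫ < κ := lt_of_lt_of_le hps (by linarith only [hκi, hκ0])
        have h7 : κ ≤ (K : ℝ) := Nat.le_ceil κ
        have h8 : ((⌊⟪u, v⟫ / ‖u‖ ^ 2⌋ : ℤ) : ℝ) < ((K : ℤ) : ℝ) := by
          push_cast
          linarith only [h5, h6, h7]
        have h9 : ⌊⟪u, v⟫ / ‖u‖ ^ 2⌋ < (K : ℤ) := by exact_mod_cast h8
        omega
    have hden : max ((⌊⟪u, v⟫ / ‖u‖ ^ 2⌋ : ℤ) : ℝ) 1 * ‖u‖ ^ 2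
        ≤ Real.sqrt (⟪u, v⟫ ^ 2 + 1) := by
      by_cases hk : ⌊⟪u, v⟫ / ‖u‖ ^ 2⌋ = 0
      · rw [hk, hQ1 hk]
        have : max ((0:ℤ):ℝ) 1 = 1 := by norm_num
        rw [this, mul_one]
        calc (1:ℝ) = Real.sqrt 1 := Real.sqrt_one.symm
          _ ≤ Real.sqrt (⟪u, v⟫ ^ 2 + 1) := Real.sqrt_le_sqrt (by nlinarith only [sq_nonneg ⟪u, v⟫])
      · have hk1 : 1 ≤ ⌊⟪u, v⟫ / ‖u‖ ^ 2⌋ := by omega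
        have hk1r : (1:ℝ) ≤ ((⌊⟪u, v⟫ / ‖u‖ ^ 2⌋ : ℤ) : ℝ) := by exact_mod_cast hk1
        rw [max_eq_left hk1r]
        calc ((⌊⟪u, v⟫ / ‖u‖ ^ 2⌋ : ℤ) : ℝ) * ‖u‖ ^ 2 ≤ ⟪u, v⟫ := hkQ
          _ = Real.sqrt (⟪u, v⟫ ^ 2) := (Real.sqrt_sq hp).symm
          _ ≤ Real.sqrt (⟪u, v⟫ ^ 2 + 1) := Real.sqrt_le_sqrt (by linarith only [])
    have hdenpos : (0:ℝ) < max ((⌊⟪u, v⟫ / ‖u‖ ^ 2⌋ : ℤ) : ℝ) 1 * ‖u‖ ^ 2 := by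
      apply mul_pos (lt_of_lt_of_le one_pos (le_max_right _ _)) hQr0
    have hfinal : ENNReal.ofReal (20 / Real.sqrt (⟪u, v⟫ ^ 2 + 1))
        ≤ g (⌊⟪u, v⟫ / ‖u‖ ^ 2⌋, ⌊det2 u v⌋) := by
      rw [hgdef]
      simp only
      rw [if_pos hcond]
      apply ENNReal.ofReal_le_ofReal
      exact div_le_div_of_nonneg_left (by norm_num) hdenpos hden
    exact le_trans hvol hfinal
  have claim_inj : Function.Injective Ψ := by
    rintro ⟨v, hvi, hn, hp, hd⟩ ⟨v', hvi', hn', hp', hd'⟩ heq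
    simp only [hΨdef, Prod.mk.injEq] at heq
    obtain ⟨hkeq, hdeq⟩ := heq
    have hdet : det2 u v = 1 ∨ det2 u v = -1 := by
      rcases (abs_eq (by norm_num : (0:ℝ) ≤ 1)).1 hd with h | h
      exacts [Or.inl h, Or.inr h]
    have hdet' : det2 u v' = 1 ∨ det2 u v' = -1 := by
      rcases (abs_eq (by norm_num : (0:ℝ) ≤ 1)).1 hd' with h | h
      exacts [Or.inl h, Or.inr h]
    have hdd : det2 u v = det2 u v' := by
      rcases hdet with h | h <;> rcases hdet' with h' | h' <;>
        rw [h, h'] <;> rw [h, h'] at hdeq <;> norm_num at hdeq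
    obtain ⟨⟨c, hc⟩, ⟨dd, hdd1⟩⟩ := id hvi
    obtain ⟨⟨c', hc'⟩, ⟨dd', hdd1'⟩⟩ := id hvi'
    have hddexp : u 0 * v 1 - u 1 * v 0 = u 0 * v' 1 - u 1 * v' 0 := hdd
    have hw0 : ‖u‖ ^ 2 * (v 0 - v' 0) = (⟪u, v⟫ - ⟪u, v'⟫) * u 0 := by
      rw [hQr, inner2, inner2]
      linear_combination (-(u 1)) * hddexp
    have hw1 : ‖u‖ ^ 2 * (v 1 - v' 1) = (⟪u, v⟫ - ⟪u, v'⟫) * u 1 := by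
      rw [hQr, inner2, inner2]
      linear_combination (u 0) * hddexp
    set t : ℝ := (⟪u, v⟫ - ⟪u, v'⟫) / ‖u‖ ^ 2 with htdef
    have ht0 : t * u 0 = v 0 - v' 0 := by
      rw [htdef, div_mul_eq_mul_div, div_eq_iff hQr0.ne']
      linear_combination hw0.symm
    have ht1 : t * u 1 = v 1 - v' 1 := by
      rw [htdef, div_mul_eq_mul_div, div_eq_iff hQr0.ne']
      linear_combination hw1.symm
    have hdf : u 0 * v' 1 - u 1 * v' 0 = det2 u v' := rfl
    have hd2' : det2 u v' * det2 u v' = 1 := by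
      rcases hdet' with h | h <;> rw [h] <;> norm_num
    have hte : t = det2 u v' * (v' 1 * (v 0 - v' 0) - v' 0 * (v 1 - v' 1)) := by
      rw [← ht0, ← ht1]
      linear_combination (-(t * det2 u v')) * hdf + (-t) * hd2'
    obtain ⟨e, he⟩ : ∃ e : ℤ, det2 u v' = (e : ℝ) := by
      rcases hdet' with h | h
      exacts [⟨1, by rw [h]; norm_num⟩, ⟨-1, by rw [h]; push_cast; norm_num⟩]
    have htz : t = ((e * (dd' * (c - c') - c' * (dd - dd')) : ℤ) : ℝ) := by
      rw [hte, he, hc, hc', hdd1, hdd1']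
      push_cast; ring
    have hpt : ⟪u, v⟫ / ‖u‖ ^ 2
        = ⟪u, v'⟫ / ‖u‖ ^ 2 + ((e * (dd' * (c - c') - c' * (dd - dd')) : ℤ) : ℝ) := by
      rw [← htz, htdef]; field_simp; ring
    rw [hpt, Int.floor_add_intCast] at hkeq
    have hz : (e * (dd' * (c - c') - c' * (dd - dd')) : ℤ) = 0 := by omega
    have htzero : t = 0 := by rw [htz, hz]; norm_num
    have hv0 : v 0 - v' 0 = 0 := by rw [← ht0, htzero]; ring
    have hv1 : v 1 - v' 1 = 0 := by rw [← ht1, htzero]; ring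
    apply Subtype.ext
    have hsub : v - v' = 0 := e2_eq_zero (show (v - v') 0 = 0 from hv0)
      (show (v - v') 1 = 0 from hv1)
    exact sub_eq_zero.1 hsub
  have claim_sum : ∑' x : ℤ × ℤ, g x ≤ ENNReal.ofReal (120 * (1 + Real.log κ) / ‖u‖ ^ 2) := by
    have hK1 : 1 ≤ K := by
      rw [hKdef]
      exact Nat.one_le_ceil_iff.2 hκ0
    set T : Finset (ℤ × ℤ) :=
      ((Finset.range (K + 1)).image (fun n : ℕ => (n : ℤ))) ×ˢ ({1, -1} : Finset ℤ) with hTdef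
    have hsupp : ∀ x : ℤ × ℤ, x ∉ T → g x = 0 := by
      intro x hx
      rw [hgdef]
      simp only
      rw [if_neg]
      rintro ⟨h2, h1⟩
      apply hx
      rw [hTdef, Finset.mem_product]
      constructor
      · rw [Finset.mem_image]
        rcases h1 with ⟨hk0, -⟩ | ⟨hk1, hkK⟩
        · exact ⟨0, Finset.mem_range.2 (Nat.succ_pos K), by rw [hk0]; rfl⟩
        · refine ⟨x.1.toNat, Finset.mem_range.2 (by omega), by omega⟩
      · rcases h2 with h | h <;> simp [h]
    rw [tsum_eq_sum hsupp]
    have hterm : ∀ x ∈ T, g x ≤ ENNReal.ofReal (20 / (max (x.1 : ℝ) 1 * ‖u‖ ^ 2)) := by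
      intro x _
      rw [hgdef]
      simp only
      split_ifs
      · exact le_refl _
      · exact zero_le
    have hterm_nonneg : ∀ n : ℕ, (0:ℝ) ≤ 40 / (max (n : ℝ) 1 * ‖u‖ ^ 2) := by
      intro n
      have : (0:ℝ) < max (n : ℝ) 1 := lt_of_lt_of_le one_pos (le_max_right _ _)
      positivity
    calc ∑ x ∈ T, g x
        ≤ ∑ x ∈ T, ENNReal.ofReal (20 / (max (x.1 : ℝ) 1 * ‖u‖ ^ 2)) := Finset.sum_le_sum hterm
      _ = ∑ k ∈ (Finset.range (K + 1)).image (fun n : ℕ => (n : ℤ)),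
            ∑ e ∈ ({1, -1} : Finset ℤ), ENNReal.ofReal (20 / (max (k : ℝ) 1 * ‖u‖ ^ 2)) := by
          rw [hTdef, Finset.sum_product]
      _ = ∑ n ∈ Finset.range (K + 1), ENNReal.ofReal (40 / (max (n : ℝ) 1 * ‖u‖ ^ 2)) := by
          rw [Finset.sum_image (fun x _ y _ h => by exact_mod_cast h)]
          apply Finset.sum_congr rfl
          intro n _
          rw [Finset.sum_insert (by decide), Finset.sum_singleton]
          rw [Int.cast_natCast, ← ENNReal.ofReal_add (by
            have : (0:ℝ) < max (n : ℝ) 1 := lt_of_lt_of_le one_pos (le_max_right _ _)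
            positivity) (by
            have : (0:ℝ) < max (n : ℝ) 1 := lt_of_lt_of_le one_pos (le_max_right _ _)
            positivity)]
          congr 1
          ring
      _ = ENNReal.ofReal (∑ n ∈ Finset.range (K + 1), 40 / (max (n : ℝ) 1 * ‖u‖ ^ 2)) :=
          (ENNReal.ofReal_sum_of_nonneg (fun n _ => hterm_nonneg n)).symm
      _ ≤ ENNReal.ofReal (120 * (1 + Real.log κ) / ‖u‖ ^ 2) := by
          apply ENNReal.ofReal_le_ofReal
          have hhb := harmonic_bound K (‖u‖ ^ 2) hQr1
          have hK0 : (0:ℝ) < (K : ℝ) := by exact_mod_cast hK1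
          have hKκ : (K : ℝ) ≤ κ + 1 := (Nat.ceil_lt_add_one hκ0.le).le
          have hlogK : Real.log K ≤ 1 + Real.log κ := by
            calc Real.log K ≤ Real.log (κ + 1) := Real.log_le_log hK0 hKκ
              _ ≤ Real.log (2 * κ) := Real.log_le_log (by linarith) (by linarith)
              _ = Real.log 2 + Real.log κ := Real.log_mul two_ne_zero (ne_of_gt hκ0)
              _ ≤ 1 + Real.log κ := by
                  have := Real.log_two_lt_d9
                  linarith
          have hlogκ : 0 ≤ Real.log κ := Real.log_nonneg hκ
          calc ∑ n ∈ Finset.range (K + 1), 40 / (max (n : ℝ) 1 * ‖u‖ ^ 2)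
              ≤ 40 * (2 + Real.log K) / ‖u‖ ^ 2 := hhb
            _ ≤ 120 * (1 + Real.log κ) / ‖u‖ ^ 2 := by
                have hnum : 40 * (2 + Real.log K) ≤ 120 * (1 + Real.log κ) := by
                  linarith only [hlogK, hlogκ]
                rw [div_le_div_iff₀ hQr0 hQr0]
                exact mul_le_mul_of_nonneg_right hnum hQr0.le

  calc totalBad F u ≤ ∑' v, g (Ψ v) := ENNReal.tsum_le_tsum claim_bound
    _ ≤ ∑' x : ℤ × ℤ, g x := ENNReal.tsum_comp_le_tsum_of_injective claim_inj g
    _ ≤ ENNReal.ofReal (120 * (1 + Real.log κ) / ‖u‖ ^ 2) := claim_sum
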